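/- arXiv:1204.1446 — 6 statements merged into one kernel-verified Lean document; each statement's English description precedes it below -/
import Mathlib

section
/- Let ν ∈ (0,1), h, λ > 0, let κ_{ν,h,λ}(θ) = h·log(λ/(λ+(−θ)^ν)) for θ ≤ 0 and ∞ for θ > 0, and let I^{(T)}_{ν,h,λ}(x) := sup_{θ∈ℝ} {θx − κ_{ν,h,λ}(θ)}. Then: I^{(T)}_{ν,h,λ}(x) = ∞ for x ≤ 0; I^{(T)}_{ν,h,λ} is (strictly) decreasing on (0,∞); lim_{x↓0} I^{(T)}_{ν,h,λ}(x) = ∞; lim_{x→∞} I^{(T)}_{ν,h,λ}(x) = 0; and I^{(T)}_{ν,h,λ} is not a good rate function, i.e. not all of its level sets {x ∈ ℝ : I^{(T)}_{ν,h,λ}(x) ≤ η}, η ≥ 0, are compact. -/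
open MeasureTheory Filter Real ProbabilityTheory
open scoped ENNReal NNReal

/-- Pochhammer symbol `(γ)_r = γ(γ+1)⋯(γ+r-1)`, with `(γ)_0 = 1`. -/
noncomputable def pochhammerReal (γ : ℝ) (r : ℕ) : ℝ := ∏ i ∈ Finset.range r, (γ + i)

/-- Generalized Mittag-Leffler function `E^γ_{α,β}(x) = Σ_r (γ)_r x^r / (r! Γ(αr+β))`. -/
noncomputable def genML (α β γ : ℝ) (x : ℝ) : ℝ :=
  ∑' r : ℕ, pochhammerReal γ r * x ^ r / (r.factorial * Real.Gamma (α * r + β))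

/-- Mittag-Leffler function `E_{ν,1}(x) = Σ_r x^r / Γ(νr+1)`. -/
noncomputable def ML (ν x : ℝ) : ℝ := ∑' r : ℕ, x ^ r / Real.Gamma (ν * r + 1)

/-- Generalized Mittag-Leffler density `f_{ν,h,λ}(t) = λ^h t^{νh-1} E^h_{ν,νh}(-λ t^ν)` for `t > 0`. -/
noncomputable def mlDensity (ν h lam : ℝ) (t : ℝ) : ℝ :=
  if 0 < t then lam ^ h * t ^ (ν * h - 1) * genML ν (ν * h) h (-(lam * t ^ ν)) else 0

/-- `log E[e^{θ X}]` as an extended real number. -/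
noncomputable def eCgf {Ω : Type*} [MeasurableSpace Ω] (P : Measure Ω) (X : Ω → ℝ)
    (θ : ℝ) : EReal :=
  ENNReal.log (∫⁻ ω, ENNReal.ofReal (Real.exp (θ * X ω)) ∂P)

/-- Legendre transform `κ*(x) = sup_θ {θ x - κ(θ)}` (extended-real valued). -/
noncomputable def legendre (κ : ℝ → EReal) (x : ℝ) : EReal :=
  ⨆ θ : ℝ, ((θ * x : ℝ) : EReal) - κ θ

/-- The large deviation principle for a family `{Z_t : t > 0}` of real random variables,
with rate function `I : ℝ → [0,∞]`. -/
def SatisfiesLDP {Ω : Type*} [MeasurableSpace Ω] (P : Measure Ω) (Z : ℝ → Ω → ℝ)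
    (I : ℝ → EReal) : Prop :=
  (∀ x, 0 ≤ I x) ∧ LowerSemicontinuous I ∧
  (∀ C : Set ℝ, IsClosed C →
    limsup (fun t : ℝ => ((1 / t : ℝ) : EReal) * ENNReal.log (P {ω | Z t ω ∈ C})) atTop
      ≤ - ⨅ x ∈ C, I x) ∧
  (∀ G : Set ℝ, IsOpen G →
    - ⨅ x ∈ G, I x
      ≤ liminf (fun t : ℝ => ((1 / t : ℝ) : EReal) * ENNReal.log (P {ω | Z t ω ∈ G})) atTop)

/-- The large deviation principle for a sequence `{Z_n : n ≥ 1}` of real random variables,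
with rate function `I : ℝ → [0,∞]`. -/
def SatisfiesLDPseq {Ω : Type*} [MeasurableSpace Ω] (P : Measure Ω) (Z : ℕ → Ω → ℝ)
    (I : ℝ → EReal) : Prop :=
  (∀ x, 0 ≤ I x) ∧ LowerSemicontinuous I ∧
  (∀ C : Set ℝ, IsClosed C →
    limsup (fun n : ℕ => ((1 / (n : ℝ) : ℝ) : EReal) * ENNReal.log (P {ω | Z n ω ∈ C})) atTop
      ≤ - ⨅ x ∈ C, I x) ∧
  (∀ G : Set ℝ, IsOpen G →
    - ⨅ x ∈ G, I x
      ≤ liminf (fun n : ℕ => ((1 / (n : ℝ) : ℝ) : EReal) * ENNReal.log (P {ω | Z n ω ∈ G})) atTop)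

/-- A rate function is good if all level sets `{x | I x ≤ η}`, `η ≥ 0`, are compact. -/
def GoodRate (I : ℝ → EReal) : Prop :=
  ∀ η : ℝ, 0 ≤ η → IsCompact {x : ℝ | I x ≤ (η : EReal)}


noncomputable def mlG (ν h lam x s : ℝ) : ℝ :=
  -(s*x) + h * (Real.log (lam + s ^ ν) - Real.log lam)

section aux
variable {ν h lam : ℝ} (hν : ν ∈ Set.Ioo (0 : ℝ) 1) (hh : 0 < h) (hlam : 0 < lam)
set_option linter.unusedSectionVars false
include hν hh hlam

lemma pos_add {s : ℝ} (hs : 0 ≤ s) : 0 < lam + s ^ ν :=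
  lt_add_of_pos_of_le hlam (Real.rpow_nonneg hs ν)

lemma mlG_zero (x : ℝ) : mlG ν h lam x 0 = 0 := by
  simp [mlG, Real.zero_rpow hν.1.ne']

lemma mlG_le {x s : ℝ} (hs : 0 ≤ s) :
    mlG ν h lam x s ≤ -(s*x) + h / lam * s ^ ν := by
  have h1 : Real.log (lam + s ^ ν) - Real.log lam = Real.log ((lam + s ^ ν)/lam) := by
    rw [Real.log_div (pos_add hν hh hlam hs).ne' hlam.ne']
  have h2 : Real.log ((lam + s ^ ν)/lam) ≤ (lam + s ^ ν)/lam - 1 :=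
    Real.log_le_sub_one_of_pos (by positivity)
  have h3 : (lam + s ^ ν)/lam - 1 = s ^ ν / lam := by field_simp; ring
  have h4 : h * Real.log ((lam + s ^ ν)/lam) ≤ h * (s ^ ν / lam) := by
    rw [← h3]; exact mul_le_mul_of_nonneg_left h2 hh.le
  unfold mlG
  rw [h1]
  have : h / lam * s ^ ν = h * (s ^ ν / lam) := by ring
  linarith

/-- log lower bound -/

lemma le_mlG {x s : ℝ} (hs : 0 ≤ s) :
    -(s*x) + h * (s ^ ν / (lam + s ^ ν)) ≤ mlG ν h lam x s := by
  have hp := pos_add hν hh hlam hs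
  have h2 : Real.log (lam / (lam + s ^ ν)) ≤ lam / (lam + s ^ ν) - 1 :=
    Real.log_le_sub_one_of_pos (by positivity)
  have h1 : Real.log (lam / (lam + s ^ ν)) = Real.log lam - Real.log (lam + s ^ ν) :=
    Real.log_div hlam.ne' hp.ne'
  have h3 : lam / (lam + s ^ ν) - 1 = -(s ^ ν / (lam + s ^ ν)) := by field_simp; ring
  have h4 : h * Real.log (lam / (lam + s ^ ν)) ≤ h * (-(s ^ ν / (lam + s ^ ν))) := by
    rw [← h3]; exact mul_le_mul_of_nonneg_left h2 hh.le
  rw [h1] at h4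
  unfold mlG
  linarith


lemma mlG_big (M : ℝ) : ∃ s : ℝ, 0 ≤ s ∧ M ≤ h * (Real.log (lam + s ^ ν) - Real.log lam) := by
  set a : ℝ := lam * Real.exp (M / h) with ha
  have ha0 : 0 < a := by positivity
  refine ⟨a ^ ν⁻¹, Real.rpow_nonneg ha0.le _, ?_⟩
  rw [Real.rpow_inv_rpow ha0.le hν.1.ne']
  have h1 : Real.log a ≤ Real.log (lam + a) :=
    Real.log_le_log ha0 (by linarith)
  rw [ha, Real.log_mul hlam.ne' (Real.exp_pos _).ne', Real.log_exp] at h1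
  have : Real.log lam + M / h ≤ Real.log (lam + a) := h1
  have h2 : M / h * h ≤ (Real.log (lam + a) - Real.log lam) * h :=
    mul_le_mul_of_nonneg_right (by linarith) hh.le
  rw [div_mul_cancel₀ _ hh.ne'] at h2
  linarith [h2]

lemma exists_pos {y : ℝ} (hy : 0 < y) : ∃ s : ℝ, 0 < s ∧ s ≤ 1 ∧ 0 < mlG ν h lam y s := by
  set c : ℝ := h / ((lam + 1) * y) with hc
  have hc0 : 0 < c := by positivity
  set d : ℝ := (c / 2) ^ (1 - ν)⁻¹ with hd
  have hd0 : 0 < d := Real.rpow_pos_of_pos (by positivity) _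
  set s : ℝ := min 1 d with hs
  have hs0 : 0 < s := lt_min one_pos hd0
  have hs1 : s ≤ 1 := min_le_left _ _
  refine ⟨s, hs0, hs1, ?_⟩
  have hνlt : (0:ℝ) < 1 - ν := by linarith [hν.2]
  have h1 : s ^ (1 - ν) ≤ c / 2 := by
    have := Real.rpow_le_rpow hs0.le (min_le_right 1 d) hνlt.le
    rwa [hd, Real.rpow_inv_rpow (by positivity) hνlt.ne'] at this
  have hsν : 0 < s ^ ν := Real.rpow_pos_of_pos hs0 _
  have hsν1 : s ^ ν ≤ 1 := Real.rpow_le_one hs0.le hs1 hν.1.le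
  have key : s * y < s ^ ν * (h / (lam + 1)) := by
    have hdecomp : s ^ ν * s ^ (1 - ν) = s := by
      rw [← Real.rpow_add hs0]; norm_num
    calc s * y = s ^ ν * (s ^ (1 - ν) * y) := by rw [← mul_assoc, hdecomp]
    _ ≤ s ^ ν * (c / 2 * y) := by
        apply mul_le_mul_of_nonneg_left (mul_le_mul_of_nonneg_right h1 hy.le) hsν.le
    _ < s ^ ν * (h / (lam + 1)) := by
        apply mul_lt_mul_of_pos_left _ hsν
        have hcy : c * y = h / (lam + 1) := by rw [hc]; field_simp
        have hpos : (0:ℝ) < h / (lam + 1) := by positivity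
        linarith
  have h2 : -(s*y) + h * (s ^ ν / (lam + s ^ ν)) ≤ mlG ν h lam y s := le_mlG hν hh hlam hs0.le
  have h3 : h * (s ^ ν / (lam + 1)) ≤ h * (s ^ ν / (lam + s ^ ν)) := by
    apply mul_le_mul_of_nonneg_left _ hh.le
    apply div_le_div_of_nonneg_left hsν.le (pos_add hν hh hlam hs0.le) (by linarith)
  have : s ^ ν * (h / (lam + 1)) = h * (s ^ ν / (lam + 1)) := by ring
  linarith

lemma exists_max {y : ℝ} (hy : 0 < y) :
    ∃ s : ℝ, 0 < s ∧ ∀ t : ℝ, 0 ≤ t → mlG ν h lam y t ≤ mlG ν h lam y s := by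
  have hνlt : (0:ℝ) < 1 - ν := by linarith [hν.2]
  set S : ℝ := max 1 ((h / (lam * y)) ^ (1 - ν)⁻¹) with hS
  have hS1 : (1:ℝ) ≤ S := le_max_left _ _
  have hS0 : (0:ℝ) ≤ S := by linarith
  -- beyond S the function is nonpositive
  have hbeyond : ∀ t : ℝ, S ≤ t → mlG ν h lam y t ≤ 0 := by
    intro t ht
    have ht0 : (0:ℝ) < t := lt_of_lt_of_le one_pos (hS1.trans ht)
    have h1 : h / (lam * y) ≤ t ^ (1 - ν) := by
      have hb : (0:ℝ) ≤ h / (lam * y) := by positivity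
      have := Real.rpow_le_rpow (Real.rpow_nonneg hb _) ((le_max_right _ _).trans ht) hνlt.le
      rwa [Real.rpow_inv_rpow hb hνlt.ne'] at this
    have hdecomp : t ^ ν * t ^ (1 - ν) = t := by
      rw [← Real.rpow_add ht0]; norm_num
    have htν : 0 < t ^ ν := Real.rpow_pos_of_pos ht0 _
    have key : h / lam * t ^ ν ≤ t * y := by
      calc h / lam * t ^ ν = t ^ ν * (h / (lam * y)) * y := by field_simp
      _ ≤ t ^ ν * t ^ (1 - ν) * y := by
          apply mul_le_mul_of_nonneg_right (mul_le_mul_of_nonneg_left h1 htν.le) hy.le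
      _ = t * y := by rw [hdecomp]
    have := mlG_le hν hh hlam (x := y) ht0.le
    linarith
  -- continuity on Icc 0 S
  have c1 : Continuous fun s : ℝ => s ^ ν :=
    continuous_iff_continuousAt.2 fun x => Real.continuousAt_rpow_const x ν (Or.inr hν.1.le)
  have c2 : ContinuousOn (fun s : ℝ => Real.log (lam + s ^ ν)) (Set.Icc 0 S) := by
    apply ContinuousOn.log ((continuous_const.add c1).continuousOn)
    intro x hx
    exact (pos_add hν hh hlam hx.1).ne'
  have c3 : ContinuousOn (fun s : ℝ => mlG ν h lam y s) (Set.Icc 0 S) := by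
    unfold mlG
    exact ((continuous_id.mul continuous_const).neg.continuousOn).add
      (continuousOn_const.mul (c2.sub continuousOn_const))
  obtain ⟨s, hsmem, hsmax⟩ := isCompact_Icc.exists_isMaxOn
    (Set.nonempty_Icc.2 hS0) c3
  have hglobal : ∀ t : ℝ, 0 ≤ t → mlG ν h lam y t ≤ mlG ν h lam y s := by
    intro t ht
    rcases le_or_gt t S with h' | h'
    · exact hsmax ⟨ht, h'⟩
    · have h0 : mlG ν h lam y 0 ≤ mlG ν h lam y s := hsmax ⟨le_rfl, hS0⟩
      rw [mlG_zero hν hh hlam] at h0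
      linarith [hbeyond t h'.le]
  obtain ⟨s₁, hs₁0, hs₁1, hs₁pos⟩ := exists_pos hν hh hlam hy
  have hspos : 0 < mlG ν h lam y s := lt_of_lt_of_le hs₁pos (hglobal s₁ hs₁0.le)
  refine ⟨s, ?_, hglobal⟩
  rcases hsmem.1.eq_or_lt with h' | h'
  · rw [← h', mlG_zero hν hh hlam] at hspos; exact absurd hspos (lt_irrefl 0)
  · exact h'

lemma mlG_small {ε : ℝ} (hε : 0 < ε) :
    ∃ X : ℝ, 0 < X ∧ ∀ x : ℝ, X ≤ x → ∀ s : ℝ, 0 ≤ s → mlG ν h lam x s ≤ ε := by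
  set δ : ℝ := (ε * lam / h) ^ ν⁻¹ with hδ
  have hδ0 : 0 < δ := Real.rpow_pos_of_pos (by positivity) _
  have hδν : δ ^ ν = ε * lam / h := Real.rpow_inv_rpow (by positivity) hν.1.ne'
  set X : ℝ := max 1 (h / lam * δ ^ (ν - 1)) with hX
  have hX0 : (0:ℝ) < X := lt_of_lt_of_le one_pos (le_max_left _ _)
  refine ⟨X, hX0, fun x hx s hs => ?_⟩
  have hx0 : 0 < x := lt_of_lt_of_le hX0 hx
  have hub := mlG_le hν hh hlam (x := x) hs
  rcases le_or_gt s δ with h' | h'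
  · have h1 : s ^ ν ≤ δ ^ ν := Real.rpow_le_rpow hs h' hν.1.le
    have h2 : h / lam * δ ^ ν = ε := by rw [hδν]; field_simp
    nlinarith [mul_le_mul_of_nonneg_left h1 (by positivity : (0:ℝ) ≤ h / lam)]
  · have hs0 : 0 < s := hδ0.trans h'
    have h1 : s ^ (ν - 1) ≤ δ ^ (ν - 1) :=
      Real.rpow_le_rpow_of_nonpos hδ0 h'.le (by linarith [hν.2])
    have hdecomp : s * s ^ (ν - 1) = s ^ ν := by
      nth_rewrite 1 [← Real.rpow_one s]
      rw [← Real.rpow_add hs0]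
      norm_num
    have key : h / lam * s ^ ν ≤ s * x := by
      calc h / lam * s ^ ν = s * (h / lam * s ^ (ν - 1)) := by rw [← hdecomp]; ring
      _ ≤ s * (h / lam * δ ^ (ν - 1)) := by
          apply mul_le_mul_of_nonneg_left (mul_le_mul_of_nonneg_left h1 (by positivity)) hs0.le
      _ ≤ s * X := mul_le_mul_of_nonneg_left (le_max_right _ _) hs0.le
      _ ≤ s * x := mul_le_mul_of_nonneg_left hx hs0.le
    linarith

variable {κ : ℝ → EReal}
    (hκ : ∀ θ : ℝ, κ θ = if θ ≤ 0
      then ((h * Real.log (lam / (lam + (-θ) ^ ν)) : ℝ) : EReal) else ⊤)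
    {I : ℝ → EReal} (hI : ∀ x, I x = legendre κ x)
include hκ hI

lemma term_eq (x : ℝ) {θ : ℝ} (hθ : θ ≤ 0) :
    ((θ * x : ℝ) : EReal) - κ θ = ((mlG ν h lam x (-θ) : ℝ) : EReal) := by
  rw [hκ θ, if_pos hθ, ← EReal.coe_sub]
  congr 1
  have hp : (0:ℝ) < lam + (-θ) ^ ν := pos_add hν hh hlam (neg_nonneg.2 hθ)
  rw [Real.log_div hlam.ne' hp.ne']
  unfold mlG
  ring

lemma mlG_le_I (x : ℝ) {s : ℝ} (hs : 0 ≤ s) :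
    ((mlG ν h lam x s : ℝ) : EReal) ≤ I x := by
  rw [hI, legendre]
  have := term_eq hν hh hlam hκ hI x (θ := -s) (by linarith)
  rw [neg_neg] at this
  rw [← this]
  exact le_iSup (fun θ : ℝ => ((θ * x : ℝ) : EReal) - κ θ) (-s)

lemma I_le_of (x : ℝ) {c : EReal}
    (hc : ∀ s : ℝ, 0 ≤ s → ((mlG ν h lam x s : ℝ) : EReal) ≤ c) : I x ≤ c := by
  rw [hI, legendre]
  refine iSup_le fun θ => ?_
  by_cases hθ : θ ≤ 0
  · rw [term_eq hν hh hlam hκ hI x hθ]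
    exact hc (-θ) (by linarith)
  · rw [hκ θ, if_neg hθ, EReal.sub_top]
    exact bot_le

end aux

/-- Properties of the Legendre transform of the generalized Mittag-Leffler cumulant
generating function, `ν ∈ (0,1)`: infinite on `(-∞,0]`, strictly decreasing on `(0,∞)`,
blows up at `0+`, vanishes at `∞`, and is not a good rate function. -/
theorem legendre_mittagLeffler_cgf_properties (ν h lam : ℝ) (hν : ν ∈ Set.Ioo (0 : ℝ) 1)
    (hh : 0 < h) (hlam : 0 < lam)
    (κ : ℝ → EReal)
    (hκ : ∀ θ : ℝ, κ θ = if θ ≤ 0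
      then ((h * Real.log (lam / (lam + (-θ) ^ ν)) : ℝ) : EReal) else ⊤)
    (I : ℝ → EReal) (hI : ∀ x, I x = legendre κ x) :
    (∀ x : ℝ, x ≤ 0 → I x = ⊤) ∧
    StrictAntiOn I (Set.Ioi 0) ∧
    Tendsto I (nhdsWithin 0 (Set.Ioi 0)) (nhds ⊤) ∧
    Tendsto I atTop (nhds (0 : EReal)) ∧
    ¬ GoodRate I := by
  obtain ⟨hν1, hν2⟩ := hν
  have hν' : ν ∈ Set.Ioo (0:ℝ) 1 := ⟨hν1, hν2⟩
  refine ⟨?_, ?_, ?_, ?_, ?_⟩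
  · -- infinite on (-∞, 0]
    intro x hx
    rw [EReal.eq_top_iff_forall_lt]
    intro M
    obtain ⟨s, hs0, hsM⟩ := mlG_big hν' hh hlam (M + 1)
    have h1 : M + 1 ≤ mlG ν h lam x s := by
      unfold mlG
      nlinarith [mul_nonneg hs0 (neg_nonneg.2 hx)]
    calc (M : EReal) < ((M + 1 : ℝ) : EReal) := by exact_mod_cast lt_add_one M
      _ ≤ ((mlG ν h lam x s : ℝ) : EReal) := by exact_mod_cast h1
      _ ≤ I x := mlG_le_I hν' hh hlam hκ hI x hs0
  · -- strictly decreasing on (0, ∞)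
    intro x hx y hy hxy
    obtain ⟨s, hs0, hmax⟩ := exists_max hν' hh hlam (Set.mem_Ioi.1 hy)
    have hIy : I y = ((mlG ν h lam y s : ℝ) : EReal) := by
      refine le_antisymm (I_le_of hν' hh hlam hκ hI y fun t ht => ?_)
        (mlG_le_I hν' hh hlam hκ hI y hs0.le)
      exact_mod_cast hmax t ht
    have hlt : mlG ν h lam y s < mlG ν h lam x s := by
      unfold mlG
      nlinarith [mul_lt_mul_of_pos_left hxy hs0]
    calc I y = ((mlG ν h lam y s : ℝ) : EReal) := hIy
      _ < ((mlG ν h lam x s : ℝ) : EReal) := by exact_mod_cast hlt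
      _ ≤ I x := mlG_le_I hν' hh hlam hκ hI x hs0.le
  · -- blows up at 0+
    rw [EReal.tendsto_nhds_top_iff_real]
    intro M
    obtain ⟨s, hs0, hsM⟩ := mlG_big hν' hh hlam (M + 2)
    have hpos : (0:ℝ) < 1 / (s + 1) := by positivity
    filter_upwards [Ioo_mem_nhdsGT hpos] with x hx
    have hsx : s * x ≤ 1 := by
      have h1 : s * x ≤ s * (1 / (s + 1)) :=
        mul_le_mul_of_nonneg_left hx.2.le hs0
      have h2 : s * (1 / (s + 1)) ≤ 1 := by
        rw [mul_one_div, div_le_one (by linarith)]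
        linarith
      linarith
    have h1 : M + 1 ≤ mlG ν h lam x s := by
      unfold mlG
      linarith
    calc (M : EReal) < ((M + 1 : ℝ) : EReal) := by exact_mod_cast lt_add_one M
      _ ≤ ((mlG ν h lam x s : ℝ) : EReal) := by exact_mod_cast h1
      _ ≤ I x := mlG_le_I hν' hh hlam hκ hI x hs0
  · -- vanishes at ∞
    refine tendsto_order.2 ⟨fun a ha => ?_, fun b hb => ?_⟩
    · filter_upwards with x
      have h0 : ((0:ℝ) : EReal) ≤ I x := by
        have := mlG_le_I hν' hh hlam hκ hI x (le_refl (0:ℝ))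
        rwa [mlG_zero hν' hh hlam] at this
      exact lt_of_lt_of_le (by exact_mod_cast ha) h0
    · obtain ⟨ε, hε0, hεb⟩ := EReal.lt_iff_exists_real_btwn.1 hb
      have hε0' : (0:ℝ) < ε := by exact_mod_cast hε0
      obtain ⟨X, hX0, hX⟩ := mlG_small hν' hh hlam hε0'
      filter_upwards [eventually_ge_atTop X] with x hx
      have hle : I x ≤ ((ε : ℝ) : EReal) :=
        I_le_of hν' hh hlam hκ hI x fun s hs => by exact_mod_cast hX x hx s hs
      exact lt_of_le_of_lt hle hεb
  · -- not a good rate function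
    intro hg
    have hK := hg 1 zero_le_one
    obtain ⟨B, hB⟩ := hK.bddAbove
    obtain ⟨X, hX0, hX⟩ := mlG_small hν' hh hlam one_pos
    set x : ℝ := max X (B + 1) with hxdef
    have hmem : x ∈ {x : ℝ | I x ≤ ((1:ℝ) : EReal)} :=
      I_le_of hν' hh hlam hκ hI x fun s hs => by
        exact_mod_cast hX x (le_max_left _ _) s hs
    have hle : x ≤ B := hB hmem
    have : B + 1 ≤ x := le_max_right _ _
    linarith
end

section
/- Let ν ∈ (0,1), h, λ > 0, let κ_{ν,h,λ}(θ) = h·log(λ/(λ+(−θ)^ν)) for θ ≤ 0 and ∞ for θ > 0, let I^{(T)}_{ν,h,λ}(y) := sup_{θ∈ℝ} {θy − κ_{ν,h,λ}(θ)}, and define I^{(M)}_{ν,h,λ}(x) := x·I^{(T)}_{ν,h,λ}(1/x) for x > 0, I^{(M)}_{ν,h,λ}(0) := 0, and I^{(M)}_{ν,h,λ}(x) := ∞ for x < 0. Then: I^{(M)}_{ν,h,λ} is increasing on [0,∞); lim_{x↓0} I^{(M)}_{ν,h,λ}(x) = I^{(M)}_{ν,h,λ}(0) = 0; and lim_{x→∞}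 I^{(M)}_{ν,h,λ}(x) = ∞. -/
open MeasureTheory Filter Real ProbabilityTheory
open scoped ENNReal NNReal

/-- Multiplying an `iSup` in `EReal` by a positive real constant on the left
is bounded by the `iSup` of the products. -/
lemma ereal_mul_iSup_le {ι : Sort*} (f : ι → EReal) {c : ℝ} (hc : 0 < c) :
    (c : EReal) * ⨆ i, f i ≤ ⨆ i, (c : EReal) * f i := by
  rw [mul_comm, ← EReal.le_div_iff_mul_le (by exact_mod_cast hc) (by simp)]
  refine iSup_le fun i => ?_
  rw [EReal.le_div_iff_mul_le (by exact_mod_cast hc) (by simp), mul_comm]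
  exact le_iSup (fun i => (c : EReal) * f i) i

/-- Properties of the rate function `I^{(M)}_{ν,h,λ}` for `ν ∈ (0,1)`: it is increasing on
`[0,∞)`, tends to `0 = I^{(M)}(0)` as `x ↓ 0`, and tends to `∞` as `x → ∞`. -/
theorem rate_function_IM_properties (ν h lam : ℝ) (hν : ν ∈ Set.Ioo (0 : ℝ) 1)
    (hh : 0 < h) (hlam : 0 < lam)
    (κ : ℝ → EReal)
    (hκ : ∀ θ : ℝ, κ θ = if θ ≤ 0
      then ((h * Real.log (lam / (lam + (-θ) ^ ν)) : ℝ) : EReal) else ⊤)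
    (IT : ℝ → EReal) (hIT : ∀ y, IT y = legendre κ y)
    (IM : ℝ → EReal)
    (hIM : ∀ x : ℝ, IM x =
      if 0 < x then ((x : ℝ) : EReal) * IT (1 / x)
      else if x = 0 then 0
      else ⊤) :
    MonotoneOn IM (Set.Ici 0) ∧
    IM 0 = 0 ∧
    Tendsto IM (nhdsWithin 0 (Set.Ioi 0)) (nhds 0) ∧
    Tendsto IM atTop (nhds ⊤) := by
  
  obtain ⟨hν0, hν1⟩ := hν
  set K : ℝ := h * (Real.log (lam + 1) - Real.log lam) with hKdef
  have hKpos : 0 < K :=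
    mul_pos hh (sub_pos.2 (Real.log_lt_log hlam (lt_add_one lam)))
  have hpow : ∀ θ : ℝ, θ ≤ 0 → 0 ≤ (-θ) ^ ν := fun θ hθ =>
    Real.rpow_nonneg (neg_nonneg.2 hθ) ν
  have hden : ∀ θ : ℝ, θ ≤ 0 → 0 < lam + (-θ) ^ ν := fun θ hθ => by
    have := hpow θ hθ; linarith
  -- the summand in the Legendre transform
  have hsummand : ∀ x θ : ℝ, θ ≤ 0 →
      ((θ * (1 / x) : ℝ) : EReal) - κ θ
        = ((θ * (1 / x) - h * Real.log (lam / (lam + (-θ) ^ ν)) : ℝ) : EReal) := by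
    intro x θ hθ; rw [hκ, if_pos hθ, ← EReal.coe_sub]
  have hsummand' : ∀ x θ : ℝ, ¬ θ ≤ 0 → ((θ * (1 / x) : ℝ) : EReal) - κ θ = ⊥ := by
    intro x θ hθ; rw [hκ, if_neg hθ, EReal.sub_top]
  have hlogdiv : ∀ θ : ℝ, θ ≤ 0 →
      Real.log (lam / (lam + (-θ) ^ ν))
        = Real.log lam - Real.log (lam + (-θ) ^ ν) := fun θ hθ =>
    Real.log_div hlam.ne' (hden θ hθ).ne'
  have hlognonpos : ∀ θ : ℝ, θ ≤ 0 → Real.log (lam / (lam + (-θ) ^ ν)) ≤ 0 := by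
    intro θ hθ
    apply Real.log_nonpos (div_nonneg hlam.le (hden θ hθ).le)
    rw [div_le_one (hden θ hθ)]
    have := hpow θ hθ; linarith
  have hκ0 : κ 0 = 0 := by
    rw [hκ, if_pos le_rfl]
    norm_num [Real.zero_rpow hν0.ne', div_self hlam.ne']
  -- lower bound for IT
  have hITnonneg : ∀ x : ℝ, 0 < x → (0 : EReal) ≤ IT (1 / x) := by
    intro x hx
    rw [hIT, legendre]
    refine le_iSup_of_le 0 ?_
    simp [hκ0]
  -- upper bound for IT for small x
  have hebound : ∀ x θ : ℝ, 0 < x → x ≤ lam / h → θ ≤ 0 →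
      θ * (1 / x) - h * Real.log (lam / (lam + (-θ) ^ ν)) ≤ K := by
    intro x θ hx hxs hθ
    rw [hlogdiv θ hθ]
    rcases le_total (-θ) 1 with hs | hs
    · have h1 : (-θ) ^ ν ≤ 1 := Real.rpow_le_one (neg_nonneg.2 hθ) hs hν0.le
      have h2 : Real.log (lam + (-θ) ^ ν) ≤ Real.log (lam + 1) :=
        Real.log_le_log (hden θ hθ) (by linarith)
      have h3 : θ * (1 / x) ≤ 0 :=
        mul_nonpos_of_nonpos_of_nonneg hθ (by positivity)
      have h4 := mul_le_mul_of_nonneg_left h2 hh.le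
      rw [hKdef]; nlinarith
    · have h0 : (0 : ℝ) ≤ -θ := by linarith
      have h1 : (-θ) ^ ν ≤ -θ := by
        calc (-θ) ^ ν ≤ (-θ) ^ (1 : ℝ) :=
              Real.rpow_le_rpow_of_exponent_le hs hν1.le
        _ = -θ := Real.rpow_one _
      set t : ℝ := (-θ) ^ ν with ht
      have ht0 : 0 ≤ t := hpow θ hθ
      have hlog2 : Real.log (lam + t) - Real.log lam ≤ t / lam := by
        rw [← Real.log_div (hden θ hθ).ne' hlam.ne']
        have h5 : Real.log ((lam + t) / lam) ≤ (lam + t) / lam - 1 :=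
          Real.log_le_sub_one_of_pos (by positivity)
        have h6 : (lam + t) / lam - 1 = t / lam := by field_simp; ring
        linarith
      have hxl : h * x ≤ lam := by
        rw [le_div_iff₀ hh] at hxs; linarith
      have h7 : h / lam ≤ 1 / x := by
        rw [div_le_div_iff₀ hlam hx]; linarith
      have h8 : h * (Real.log (lam + t) - Real.log lam) ≤ h * (t / lam) :=
        mul_le_mul_of_nonneg_left hlog2 hh.le
      have h9 : h * (t / lam) ≤ h * ((-θ) / lam) := by
        apply mul_le_mul_of_nonneg_left _ hh.le
        exact div_le_div_of_nonneg_right h1 hlam.le  -- maybe wrong name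
      have h10 : (-θ) * (h / lam) ≤ (-θ) * (1 / x) :=
        mul_le_mul_of_nonneg_left h7 h0
      have h11 : h * ((-θ) / lam) = (-θ) * (h / lam) := by ring
      nlinarith [hKpos]
  have hITle : ∀ x : ℝ, 0 < x → x ≤ lam / h → IT (1 / x) ≤ (K : EReal) := by
    intro x hx hxs
    rw [hIT, legendre]
    refine iSup_le fun θ => ?_
    by_cases hθ : θ ≤ 0
    · rw [hsummand x θ hθ]
      exact_mod_cast hebound x θ hx hxs hθ
    · rw [hsummand' x θ hθ]; exact bot_le
  -- nonnegativity of IM on positives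
  have hIMnonneg : ∀ x : ℝ, 0 < x → (0 : EReal) ≤ IM x := by
    intro x hx
    rw [hIM, if_pos hx]
    exact mul_nonneg (by exact_mod_cast hx.le) (hITnonneg x hx)
  -- upper bound for IM for small x
  have hIMle : ∀ x : ℝ, 0 < x → x ≤ lam / h → IM x ≤ ((x * K : ℝ) : EReal) := by
    intro x hx hxs
    rw [hIM, if_pos hx, EReal.coe_mul]
    exact mul_le_mul_of_nonneg_left (hITle x hx hxs) (by exact_mod_cast hx.le)
  -- lower bound for IM (θ = -1 summand)
  have hIMge : ∀ x : ℝ, 0 < x → ((-1 + x * K : ℝ) : EReal) ≤ IM x := by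
    intro x hx
    rw [hIM, if_pos hx]
    have key : (((-1 + x * K) / x : ℝ) : EReal) ≤ IT (1 / x) := by
      rw [hIT, legendre]
      refine le_iSup_of_le (-1) ?_
      rw [hsummand x (-1) (by norm_num)]
      apply EReal.coe_le_coe_iff.2
      rw [hlogdiv (-1) (by norm_num)]
      have : (-(-1 : ℝ)) ^ ν = 1 := by norm_num
      rw [this, hKdef]
      have hxne : x ≠ 0 := hx.ne'
      apply le_of_eq
      field_simp
      ring
    have h2 := mul_le_mul_of_nonneg_left key (by exact_mod_cast hx.le : (0:EReal) ≤ (x:ℝ))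
    calc ((-1 + x * K : ℝ) : EReal)
        = ((x : ℝ) : EReal) * (((-1 + x * K) / x : ℝ) : EReal) := by
          rw [← EReal.coe_mul]
          norm_cast
          field_simp
      _ ≤ ((x : ℝ) : EReal) * IT (1 / x) := h2
  -- monotone core
  have hmono : ∀ a b : ℝ, 0 < a → a ≤ b →
      ((a : ℝ) : EReal) * IT (1 / a) ≤ ((b : ℝ) : EReal) * IT (1 / b) := by
    intro a b ha hab
    have hb : 0 < b := lt_of_lt_of_le ha hab
    calc ((a : ℝ) : EReal) * IT (1 / a)
        ≤ ⨆ θ : ℝ, ((a : ℝ) : EReal) * (((θ * (1 / a) : ℝ) : EReal) - κ θ) := by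
          rw [hIT, legendre]; exact ereal_mul_iSup_le _ ha
      _ ≤ ((b : ℝ) : EReal) * IT (1 / b) := by
          refine iSup_le fun θ => ?_
          by_cases hθ : θ ≤ 0
          · rw [hsummand a θ hθ, ← EReal.coe_mul]
            have hc := hlognonpos θ hθ
            set c : ℝ := Real.log (lam / (lam + (-θ) ^ ν)) with hcdef
            have step : a * (θ * (1 / a) - h * c) ≤ b * (θ * (1 / b) - h * c) := by
              have e1 : a * (θ * (1 / a) - h * c) = θ - a * (h * c) := by
                field_simp
              have e2 : b * (θ * (1 / b) - h * c) = θ - b * (h * c) := by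
                field_simp
              have e3 : b * (h * c) ≤ a * (h * c) :=
                mul_le_mul_of_nonpos_right hab (by nlinarith)
              rw [e1, e2]; linarith
            calc (((a * (θ * (1 / a) - h * c)) : ℝ) : EReal)
                ≤ (((b * (θ * (1 / b) - h * c)) : ℝ) : EReal) := by exact_mod_cast step
              _ = ((b : ℝ) : EReal) * (((θ * (1 / b) : ℝ) : EReal) - κ θ) := by
                  rw [hsummand b θ hθ, ← EReal.coe_mul]
              _ ≤ ((b : ℝ) : EReal) * IT (1 / b) := by
                  apply mul_le_mul_of_nonneg_left _ (by exact_mod_cast hb.le : (0:EReal) ≤ (b:ℝ))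
                  rw [hIT, legendre]
                  exact le_iSup (fun θ : ℝ => ((θ * (1 / b) : ℝ) : EReal) - κ θ) θ
          · rw [hsummand' a θ hθ, EReal.coe_mul_bot_of_pos ha]
            exact bot_le
  have hIM0 : IM 0 = 0 := by rw [hIM]; norm_num
  refine ⟨?_, hIM0, ?_, ?_⟩
  · -- MonotoneOn
    intro a ha b hb hab
    rcases eq_or_lt_of_le (Set.mem_Ici.1 ha) with h0 | h0
    · rcases eq_or_lt_of_le (Set.mem_Ici.1 hb) with h0' | h0'
      · rw [← h0, ← h0']
      · rw [← h0, hIM0]; exact hIMnonneg b h0'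
    · have hb' : 0 < b := lt_of_lt_of_le h0 hab
      rw [hIM a, if_pos h0, hIM b, if_pos hb']
      exact hmono a b h0 hab
  · -- limit at 0+
    apply tendsto_of_tendsto_of_tendsto_of_le_of_le'
      (g := fun _ : ℝ => (0 : EReal)) (h := fun x : ℝ => ((x * K : ℝ) : EReal))
      tendsto_const_nhds
    · have hr : Tendsto (fun x : ℝ => x * K) (nhdsWithin 0 (Set.Ioi 0)) (nhds 0) := by
        have : Tendsto (fun x : ℝ => x * K) (nhds 0) (nhds (0 * K)) :=
          (continuous_mul_right K).tendsto 0
        simpa using this.mono_left nhdsWithin_le_nhds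
      have := EReal.tendsto_coe.2 hr
      simpa using this
    · filter_upwards [self_mem_nhdsWithin] with x hx using hIMnonneg x hx
    · have hmem : Set.Iio (lam / h) ∈ nhdsWithin (0 : ℝ) (Set.Ioi 0) :=
        nhdsWithin_le_nhds (Iio_mem_nhds (by positivity))
      filter_upwards [self_mem_nhdsWithin, hmem] with x hx1 hx2
      exact hIMle x hx1 (le_of_lt hx2)
  · -- limit at ∞
    rw [EReal.tendsto_nhds_top_iff_real]
    intro M
    have hr : Tendsto (fun x : ℝ => -1 + x * K) atTop atTop :=
      tendsto_atTop_add_const_left _ _ (Tendsto.atTop_mul_const hKpos tendsto_id)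
    filter_upwards [hr.eventually (eventually_gt_atTop M), eventually_gt_atTop (0 : ℝ)]
      with x hx1 hx2
    calc (M : EReal) < ((-1 + x * K : ℝ) : EReal) := by exact_mod_cast hx1
      _ ≤ IM x := hIMge x hx2
end

section
/- Let h, λ > 0 and ν = 1/2, and let κ_{1/2,h,λ}(θ) = h·log(λ/(λ+√(−θ))) for θ ≤ 0 and ∞ for θ > 0. Then for every x > 0, the Legendre transform I^{(T)}_{1/2,h,λ}(x) := sup_{θ≤0} {θx − h·log(λ/(λ+(−θ)^{1/2}))} is attained at θ = −(−λ/2 + (1/2)√(λ² + 2h/x))² and equals −x·((1/2)√(λ² + 2h/x) − λ/2)² + h·log(1/2 + (1/2)√(1 + 2h/(λ²x))). -/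
open MeasureTheory Filter Real ProbabilityTheory
open scoped ENNReal NNReal

set_option maxHeartbeats 1600000 in
/-- Explicit Legendre transform of `κ_{1/2,h,λ}`: for `x > 0` the supremum of
`θx - h log(λ/(λ+√(-θ)))` over `θ ≤ 0` is attained at
`θ₀ = -(-λ/2 + (1/2)√(λ²+2h/x))²` and equals the stated explicit value. -/
theorem legendre_half_cgf_explicit (h lam x : ℝ) (hh : 0 < h) (hlam : 0 < lam) (hx : 0 < x) :
    let g : ℝ → ℝ := fun θ => θ * x - h * Real.log (lam / (lam + Real.sqrt (-θ)))
    let θ₀ : ℝ := -(-(lam / 2) + Real.sqrt (lam ^ 2 + 2 * h / x) / 2) ^ 2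
    let V : ℝ := -x * (Real.sqrt (lam ^ 2 + 2 * h / x) / 2 - lam / 2) ^ 2
      + h * Real.log (1 / 2 + Real.sqrt (1 + 2 * h / (lam ^ 2 * x)) / 2)
    θ₀ ≤ 0 ∧ g θ₀ = V ∧ IsGreatest (g '' Set.Iic 0) V := by
  intro g θ₀ V
  have hs2pos : (0:ℝ) < lam ^ 2 + 2 * h / x := by positivity
  set s := Real.sqrt (lam ^ 2 + 2 * h / x) with hs
  have hssq : s ^ 2 = lam ^ 2 + 2 * h / x := Real.sq_sqrt hs2pos.le
  have hslam : lam < s := by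
    have h1 : Real.sqrt (lam ^ 2) < Real.sqrt (lam ^ 2 + 2 * h / x) :=
      Real.sqrt_lt_sqrt (by positivity) (lt_add_of_pos_right _ (by positivity))
    rwa [Real.sqrt_sq hlam.le] at h1
  set u₀ : ℝ := (s - lam) / 2 with hu₀def
  have hu₀pos : 0 < u₀ := by rw [hu₀def]; linarith
  have hθ₀ : θ₀ = -u₀ ^ 2 := by simp only [hu₀def]; ring
  have hxs : x * s ^ 2 = x * lam ^ 2 + 2 * h := by
    rw [hssq]; field_simp
  have hkey : h = 2 * x * u₀ * (lam + u₀) := by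
    simp only [hu₀def]; linear_combination (-(1:ℝ)/2) * hxs
  have hlu₀pos : 0 < lam + u₀ := by positivity
  have hsqrtθ₀ : Real.sqrt (-θ₀) = u₀ := by
    rw [hθ₀, neg_neg, Real.sqrt_sq hu₀pos.le]
  have hVlog : 1 / 2 + Real.sqrt (1 + 2 * h / (lam ^ 2 * x)) / 2 = (lam + u₀) / lam := by
    have h1 : 1 + 2 * h / (lam ^ 2 * x) = (lam ^ 2 + 2 * h / x) / lam ^ 2 := by
      rw [eq_div_iff (by positivity : (lam:ℝ) ^ 2 ≠ 0)]
      field_simp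
    rw [h1, Real.sqrt_div hs2pos.le, Real.sqrt_sq hlam.le, ← hs, hu₀def,
      eq_div_iff hlam.ne']
    field_simp
    ring
  have hgθ₀ : g θ₀ = V := by
    show θ₀ * x - h * Real.log (lam / (lam + Real.sqrt (-θ₀))) = V
    rw [hsqrtθ₀]
    show _ = -x * (s / 2 - lam / 2) ^ 2 + h * Real.log (1 / 2 + Real.sqrt (1 + 2 * h / (lam ^ 2 * x)) / 2)
    rw [hVlog, Real.log_div hlam.ne' hlu₀pos.ne', Real.log_div hlu₀pos.ne' hlam.ne', hθ₀]
    have : (s / 2 - lam / 2) ^ 2 = u₀ ^ 2 := by rw [hu₀def]; ring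
    rw [this]; ring
  have hθ₀le : θ₀ ≤ 0 := by rw [hθ₀]; nlinarith [sq_nonneg u₀]
  refine ⟨hθ₀le, hgθ₀, ⟨θ₀, Set.mem_Iic.2 hθ₀le, hgθ₀⟩, ?_⟩
  rintro v ⟨θ, hθle, rfl⟩
  simp only [Set.mem_Iic] at hθle
  set u : ℝ := Real.sqrt (-θ) with hu
  have hupos : 0 ≤ u := Real.sqrt_nonneg _
  have hθu : θ = -u ^ 2 := by rw [hu, Real.sq_sqrt (neg_nonneg.2 hθle), neg_neg]
  have hlupos : 0 < lam + u := by linarith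
  have hlog : Real.log (lam + u) - Real.log (lam + u₀) ≤ (u - u₀) / (lam + u₀) := by
    rw [← Real.log_div hlupos.ne' hlu₀pos.ne']
    have h1 := Real.log_le_sub_one_of_pos (show 0 < (lam + u) / (lam + u₀) by positivity)
    have h2 : (lam + u) / (lam + u₀) - 1 = (u - u₀) / (lam + u₀) := by
      field_simp
      ring
    linarith
  have h1 : h * (Real.log (lam + u) - Real.log (lam + u₀)) ≤ h * ((u - u₀) / (lam + u₀)) :=
    mul_le_mul_of_nonneg_left hlog hh.le
  have h2 : h * ((u - u₀) / (lam + u₀)) = 2 * x * u₀ * (u - u₀) := by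
    rw [hkey]; field_simp
  have h3 : 2 * x * u₀ * (u - u₀) ≤ x * (u ^ 2 - u₀ ^ 2) := by
    nlinarith [sq_nonneg (u - u₀)]
  show θ * x - h * Real.log (lam / (lam + u)) ≤ V
  rw [← hgθ₀]
  show _ ≤ θ₀ * x - h * Real.log (lam / (lam + Real.sqrt (-θ₀)))
  rw [hsqrtθ₀, Real.log_div hlam.ne' hlupos.ne', Real.log_div hlam.ne' hlu₀pos.ne', hθu, hθ₀]
  nlinarith [h1, h2, h3]
end

section
/- Let h, λ > 0 and define Λ_{1/2,h,λ}(θ) := (λ(e^{θ/h} − 1))²·1_{θ≥0} for θ ∈ ℝ, i.e. Λ_{1/2,h,λ}(θ) = (λ(e^{θ/h}−1))² for θ ≥ 0 and 0 for θ < 0. Then for every x > 0, sup_{θ∈ℝ} {θx − Λ_{1/2,h,λ}(θ)} = hx·log(1/2 + (1/2)√(1 + 2hx/λ²)) − ((1/2)√(λ² + 2hx) − λ/2)², and the supremum is attained at θ = h·log(1/2 + (1/2)√(1 + 2hx/λ²)). -/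
open MeasureTheory Filter Real ProbabilityTheory
open scoped ENNReal NNReal

/-- Explicit Legendre transform of `Λ_{1/2,h,λ}(θ) = (λ(e^{θ/h}-1))²·1_{θ≥0}`: for `x > 0`
the supremum of `θx - Λ(θ)` over `θ ∈ ℝ` is attained at
`θ₀ = h log(1/2 + (1/2)√(1+2hx/λ²))` and equals the stated explicit value. -/
theorem legendre_Lambda_half_explicit (h lam x : ℝ) (hh : 0 < h) (hlam : 0 < lam) (hx : 0 < x) :
    let Λ : ℝ → ℝ := fun θ => if 0 ≤ θ then (lam * (Real.exp (θ / h) - 1)) ^ 2 else 0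
    let θ₀ : ℝ := h * Real.log (1 / 2 + Real.sqrt (1 + 2 * h * x / lam ^ 2) / 2)
    let V : ℝ := h * x * Real.log (1 / 2 + Real.sqrt (1 + 2 * h * x / lam ^ 2) / 2)
      - (Real.sqrt (lam ^ 2 + 2 * h * x) / 2 - lam / 2) ^ 2
    θ₀ * x - Λ θ₀ = V ∧ IsGreatest (Set.range fun θ : ℝ => θ * x - Λ θ) V := by
  intro Λ θ₀ V
  set s : ℝ := Real.sqrt (lam ^ 2 + 2 * h * x) with hs_def
  have hs_nonneg : 0 ≤ s := Real.sqrt_nonneg _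
  have hs_sq : s ^ 2 = lam ^ 2 + 2 * h * x := Real.sq_sqrt (by positivity)
  have hs_gt : lam < s := by
    nlinarith [hs_sq, hs_nonneg, hx, hh, hlam]
  have hsqrt_eq : Real.sqrt (1 + 2 * h * x / lam ^ 2) = s / lam := by
    have h1 : (1 + 2 * h * x / lam ^ 2) = (s / lam) ^ 2 := by
      field_simp
      nlinarith [hs_sq]
    rw [h1, Real.sqrt_sq (by positivity)]
  set u : ℝ := 1 / 2 + s / lam / 2 with hu_def
  have hu1 : (1 : ℝ) < u := by
    rw [hu_def]
    have : 1 < s / lam := (one_lt_div hlam).2 hs_gt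
    linarith
  have hu0 : (0 : ℝ) < u := by linarith
  have hx_eq : h * x = 2 * lam ^ 2 * u * (u - 1) := by
    rw [hu_def]
    field_simp
    nlinarith [hs_sq]
  have hθ₀ : θ₀ = h * Real.log u := by
    show h * Real.log (1 / 2 + Real.sqrt (1 + 2 * h * x / lam ^ 2) / 2) = _
    rw [hsqrt_eq]
  have hlogu : 0 ≤ Real.log u := Real.log_nonneg hu1.le
  have hθ₀nonneg : 0 ≤ θ₀ := by rw [hθ₀]; positivity
  have hexp : Real.exp (θ₀ / h) = u := by
    have hdiv : θ₀ / h = Real.log u := by rw [hθ₀]; field_simp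
    rw [hdiv, Real.exp_log hu0]
  have hΛdef : ∀ θ : ℝ, Λ θ = if 0 ≤ θ then (lam * (Real.exp (θ / h) - 1)) ^ 2 else 0 :=
    fun θ => rfl
  have hΛθ₀ : Λ θ₀ = (s / 2 - lam / 2) ^ 2 := by
    rw [hΛdef, if_pos hθ₀nonneg, hexp, hu_def]
    field_simp
    ring
  have hVeq : V = h * x * Real.log u - lam ^ 2 * (u - 1) ^ 2 := by
    show h * x * Real.log (1 / 2 + Real.sqrt (1 + 2 * h * x / lam ^ 2) / 2)
      - (s / 2 - lam / 2) ^ 2 = _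
    rw [hsqrt_eq]
    have : (s / 2 - lam / 2) ^ 2 = lam ^ 2 * (u - 1) ^ 2 := by
      rw [hu_def]; field_simp; ring
    rw [this, hu_def]
  clear_value s u Λ θ₀ V
  have key : ∀ t : ℝ, 0 < t →
      h * x * Real.log t - lam ^ 2 * (t - 1) ^ 2
        ≤ h * x * Real.log u - lam ^ 2 * (u - 1) ^ 2 := by
    intro t ht
    have hlog : Real.log t - Real.log u ≤ t / u - 1 := by
      have h1 := Real.log_le_sub_one_of_pos (show (0 : ℝ) < t / u by positivity)
      rwa [Real.log_div (ne_of_gt ht) (ne_of_gt hu0)] at h1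
    have hlog2 : u * Real.log t ≤ u * Real.log u + (t - u) := by
      have h1 := mul_le_mul_of_nonneg_left hlog hu0.le
      have h2 : u * (t / u - 1) = t - u := by field_simp
      rw [mul_sub, h2] at h1
      linarith
    have h3 : h * x * Real.log t ≤ h * x * Real.log u + 2 * lam ^ 2 * (u - 1) * (t - u) := by
      have h4 : 0 ≤ 2 * lam ^ 2 * (u - 1) := by nlinarith
      calc h * x * Real.log t = 2 * lam ^ 2 * (u - 1) * (u * Real.log t) := by
            rw [hx_eq]; ring
        _ ≤ 2 * lam ^ 2 * (u - 1) * (u * Real.log u + (t - u)) :=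
            mul_le_mul_of_nonneg_left hlog2 h4
        _ = h * x * Real.log u + 2 * lam ^ 2 * (u - 1) * (t - u) := by
            rw [hx_eq]; ring
    nlinarith [sq_nonneg (t - u), h3, sq_nonneg lam]
  have hub : ∀ θ : ℝ, θ * x - Λ θ ≤ V := by
    intro θ
    rw [hVeq]
    by_cases hθ : 0 ≤ θ
    · have hΛ : Λ θ = lam ^ 2 * (Real.exp (θ / h) - 1) ^ 2 := by
        rw [hΛdef, if_pos hθ]; ring
      rw [hΛ]
      have hlogt : Real.log (Real.exp (θ / h)) = θ / h := Real.log_exp _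
      have := key (Real.exp (θ / h)) (Real.exp_pos _)
      rw [hlogt] at this
      have hθx : h * x * (θ / h) = θ * x := by field_simp
      linarith [this, hθx.symm.le, hθx.le]
    · have hΛ : Λ θ = 0 := by rw [hΛdef, if_neg hθ]
      rw [hΛ]
      have h0 := key 1 one_pos
      rw [Real.log_one] at h0
      norm_num at h0
      have hθx : θ * x ≤ 0 := mul_nonpos_of_nonpos_of_nonneg (le_of_not_ge hθ) hx.le
      linarith
  have heq : θ₀ * x - Λ θ₀ = V := by
    rw [hΛθ₀, hVeq, hθ₀]
    have : (s / 2 - lam / 2) ^ 2 = lam ^ 2 * (u - 1) ^ 2 := by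
      rw [hu_def]; field_simp; ring
    rw [this]; ring
  exact ⟨heq, ⟨⟨θ₀, heq⟩, by rintro v ⟨θ, rfl⟩; exact hub θ⟩⟩
end

section
/- Let λ > 0. For x > 0 the infimum inf_{y>0} {x·log(x/(λy)) − x + λy + y²/4} is attained at y = √(λ² + 2x) − λ and equals x·log(1/2 + (1/2)√(1 + 2x/λ²)) − ((1/2)√(λ² + 2x) − λ/2)². Consequently, defining J^{(M)}(x) := inf_{y≥0} {K(x|y) + y²/4}, where K(x|y) := x·log(x/(λy)) − x + λy for x ≥ 0, y > 0, K(x|y) := ∞ for x < 0, and K(0|0) := 0, K(x|0) := ∞ for x ≠ 0, one has J^{(M)}(x) = I^{(M)}_{1/2,1,λ}(x) for all x ∈ ℝ, where I^{(M)}_{1/2,1,λ}(x) = x·log(1/2 + (1/2)√(1 + 2x/λ²)) − ((1/2)√(λ² + 2x) − λ/2)² for x > 0, I^{(M)}_{1/2,1,λ}(0) = 0, and I^{(M)}_{1/2,1,λ}(x) = ∞ for x < 0. -/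
open MeasureTheory Filter Real ProbabilityTheory
open scoped ENNReal NNReal

/-- The infimum `inf_{y>0} {x log(x/(λy)) - x + λy + y²/4}` is attained at
`y = √(λ²+2x) - λ` with the stated explicit value; consequently
`J^{(M)} = I^{(M)}_{1/2,1,λ}`. -/
theorem inf_formula_and_JM_eq_IM (lam : ℝ) (hlam : 0 < lam)
    (K : ℝ → ℝ → EReal)
    (hK : ∀ x y : ℝ, K x y =
      if x < 0 then ⊤
      else if 0 < y then ((x * Real.log (x / (lam * y)) - x + lam * y : ℝ) : EReal)
      else if x = 0 then 0 else ⊤)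
    (JM : ℝ → EReal)
    (hJM : ∀ x : ℝ, JM x = ⨅ y ∈ Set.Ici (0 : ℝ), K x y + ((y ^ 2 / 4 : ℝ) : EReal))
    (IM : ℝ → EReal)
    (hIM : ∀ x : ℝ, IM x =
      if 0 < x then
        ((x * Real.log (1 / 2 + Real.sqrt (1 + 2 * x / lam ^ 2) / 2)
          - (Real.sqrt (lam ^ 2 + 2 * x) / 2 - lam / 2) ^ 2 : ℝ) : EReal)
      else if x = 0 then 0 else ⊤) :
    (∀ x : ℝ, 0 < x →
      (fun y : ℝ => x * Real.log (x / (lam * y)) - x + lam * y + y ^ 2 / 4)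
          (Real.sqrt (lam ^ 2 + 2 * x) - lam)
        = x * Real.log (1 / 2 + Real.sqrt (1 + 2 * x / lam ^ 2) / 2)
          - (Real.sqrt (lam ^ 2 + 2 * x) / 2 - lam / 2) ^ 2
      ∧ IsLeast
          ((fun y : ℝ => x * Real.log (x / (lam * y)) - x + lam * y + y ^ 2 / 4) '' Set.Ioi 0)
          (x * Real.log (1 / 2 + Real.sqrt (1 + 2 * x / lam ^ 2) / 2)
            - (Real.sqrt (lam ^ 2 + 2 * x) / 2 - lam / 2) ^ 2)) ∧
    (∀ x : ℝ, JM x = IM x) := by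
  have main : ∀ x : ℝ, 0 < x →
      (fun y : ℝ => x * Real.log (x / (lam * y)) - x + lam * y + y ^ 2 / 4)
          (Real.sqrt (lam ^ 2 + 2 * x) - lam)
        = x * Real.log (1 / 2 + Real.sqrt (1 + 2 * x / lam ^ 2) / 2)
          - (Real.sqrt (lam ^ 2 + 2 * x) / 2 - lam / 2) ^ 2
      ∧ IsLeast
          ((fun y : ℝ => x * Real.log (x / (lam * y)) - x + lam * y + y ^ 2 / 4) '' Set.Ioi 0)
          (x * Real.log (1 / 2 + Real.sqrt (1 + 2 * x / lam ^ 2) / 2)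
            - (Real.sqrt (lam ^ 2 + 2 * x) / 2 - lam / 2) ^ 2) := by
    intro x hx
    set s := Real.sqrt (lam ^ 2 + 2 * x) with hs
    have hs2 : s ^ 2 = lam ^ 2 + 2 * x := Real.sq_sqrt (by positivity)
    have hsnn : 0 ≤ s := Real.sqrt_nonneg _
    have hslam : lam < s := by nlinarith
    have hy0 : 0 < s - lam := by linarith
    have hsqrt : Real.sqrt (1 + 2 * x / lam ^ 2) = s / lam := by
      have h1 : 1 + 2 * x / lam ^ 2 = (lam ^ 2 + 2 * x) / lam ^ 2 := by field_simp
      rw [h1, Real.sqrt_div (by positivity), Real.sqrt_sq hlam.le]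
    have hlogarg : x / (lam * (s - lam)) = 1 / 2 + Real.sqrt (1 + 2 * x / lam ^ 2) / 2 := by
      rw [hsqrt]
      rw [div_eq_iff (by positivity)]
      field_simp
      nlinarith [hs2]
    have heq : (fun y : ℝ => x * Real.log (x / (lam * y)) - x + lam * y + y ^ 2 / 4)
          (s - lam)
        = x * Real.log (1 / 2 + Real.sqrt (1 + 2 * x / lam ^ 2) / 2)
          - (s / 2 - lam / 2) ^ 2 := by
      simp only
      rw [hlogarg]
      nlinarith [hs2]
    refine ⟨heq, ⟨⟨s - lam, hy0, heq⟩, ?_⟩⟩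
    rintro v ⟨y, hy, rfl⟩
    simp only [Set.mem_Ioi] at hy
    rw [← heq]
    simp only
    -- show f (s - lam) ≤ f y
    have hxval : x = ((s - lam) ^ 2 + 2 * lam * (s - lam)) / 2 := by nlinarith [hs2]
    have hlog : Real.log (y / (s - lam)) ≤ y / (s - lam) - 1 :=
      Real.log_le_sub_one_of_pos (by positivity)
    have hlog2 : (s - lam) * Real.log (y / (s - lam)) ≤ y - (s - lam) := by
      have := mul_le_mul_of_nonneg_left hlog hy0.le
      calc (s - lam) * Real.log (y / (s - lam)) ≤ (s - lam) * (y / (s - lam) - 1) := this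
        _ = y - (s - lam) := by field_simp
    have hsplit : x * Real.log (x / (lam * y))
        = x * Real.log (x / (lam * (s - lam))) - x * Real.log (y / (s - lam)) := by
      have : x / (lam * y) = (x / (lam * (s - lam))) / (y / (s - lam)) := by
        field_simp
      rw [this, Real.log_div (by positivity) (by positivity)]
      ring
    rw [hsplit]
    have hmul : x * Real.log (y / (s - lam)) ≤ ((s - lam) / 2 + lam) * (y - (s - lam)) := by
      have h1 : x * Real.log (y / (s - lam))
          = ((s - lam) / 2 + lam) * ((s - lam) * Real.log (y / (s - lam))) := by
        rw [hxval]; ring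
      rw [h1]
      exact mul_le_mul_of_nonneg_left hlog2 (by positivity)
    nlinarith [sq_nonneg (y - (s - lam))]
  refine ⟨main, ?_⟩
  intro x
  rcases lt_trichotomy x 0 with hx | hx | hx
  · rw [hJM, hIM, if_neg (by linarith), if_neg (by linarith)]
    refine le_antisymm le_top (le_iInf₂ fun y hy => ?_)
    rw [hK, if_pos hx]
    simp
  · subst hx
    rw [hJM, hIM, if_neg (lt_irrefl 0), if_pos rfl]
    refine le_antisymm ?_ (le_iInf₂ fun y hy => ?_)
    · refine iInf₂_le_of_le 0 Set.self_mem_Ici ?_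
      rw [hK]
      norm_num
    · rw [hK]
      rcases eq_or_lt_of_le (Set.mem_Ici.mp hy) with h0 | h0
      · rw [← h0]; norm_num
      · rw [if_neg (lt_irrefl 0), if_pos h0, ← EReal.coe_add]
        have h : (0:ℝ) ≤ (0 * Real.log (0 / (lam * y)) - 0 + lam * y) + y ^ 2 / 4 := by
          nlinarith
        exact_mod_cast h
  · obtain ⟨heq, hleast⟩ := main x hx
    set m := x * Real.log (1 / 2 + Real.sqrt (1 + 2 * x / lam ^ 2) / 2)
          - (Real.sqrt (lam ^ 2 + 2 * x) / 2 - lam / 2) ^ 2 with hm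
    have hy0 : 0 < Real.sqrt (lam ^ 2 + 2 * x) - lam := by
      have hs2 : Real.sqrt (lam ^ 2 + 2 * x) ^ 2 = lam ^ 2 + 2 * x :=
        Real.sq_sqrt (by positivity)
      nlinarith [Real.sqrt_nonneg (lam ^ 2 + 2 * x)]
    rw [hJM, hIM, if_pos hx]
    refine le_antisymm ?_ (le_iInf₂ fun y hy => ?_)
    · refine iInf₂_le_of_le (Real.sqrt (lam ^ 2 + 2 * x) - lam) hy0.le ?_
      rw [hK, if_neg (by linarith), if_pos hy0, ← EReal.coe_add]
      have heqX : x * Real.log (x / (lam * (Real.sqrt (lam ^ 2 + 2 * x) - lam))) - x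
          + lam * (Real.sqrt (lam ^ 2 + 2 * x) - lam)
          + (Real.sqrt (lam ^ 2 + 2 * x) - lam) ^ 2 / 4 = m := by
        simpa using heq
      exact_mod_cast le_of_eq heqX
    · rw [hK, if_neg (by linarith)]
      rcases eq_or_lt_of_le (Set.mem_Ici.mp hy) with h0 | h0
      · rw [if_neg (by rw [← h0]; exact lt_irrefl _), if_neg (by linarith)]
        simp
      · rw [if_pos h0, ← EReal.coe_add]
        exact_mod_cast hleast.2 ⟨y, h0, rfl⟩
end

section
/- Let ν ∈ (0,1), h, λ, c > 0 and θ ≥ 0. The identity e^{−cθt}·E^h_{ν,νh}(−λt^ν) = E^h_{ν,νh}(−(λ+(cθ)^ν)·t^ν) holds for all t > 0 if and only if θ = 0. In contrast, for ν = 1 the identity e^{−cθt}·E^h_{1,h}(−λt) = E^h_{1,h}(−(λ+cθ)t) holds for all t > 0 and all θ ≥ 0. -/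
open MeasureTheory Filter Real ProbabilityTheory
open scoped ENNReal NNReal

section MLaux

lemma poch_pos {h : ℝ} (hh : 0 < h) (r : ℕ) : 0 < pochhammerReal h r :=
  Finset.prod_pos fun i _ => by positivity

lemma Gamma_add_nat {h : ℝ} (hh : 0 < h) (r : ℕ) :
    Real.Gamma (h + r) = pochhammerReal h r * Real.Gamma h := by
  induction r with
  | zero => simp [pochhammerReal]
  | succ n ih =>
    have h1 : h + (n + 1 : ℕ) = (h + n) + 1 := by push_cast; ring
    have h2 : h + (n : ℝ) ≠ 0 := by positivity
    rw [h1, Real.Gamma_add_one h2, ih]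
    unfold pochhammerReal
    rw [Finset.prod_range_succ]
    ring

lemma poch_le {h : ℝ} (hh : 0 < h) (H : ℕ) (hH : h ≤ H) (r : ℕ) :
    pochhammerReal h r ≤ (H : ℝ) ^ r * r.factorial := by
  have hH0 : (0:ℝ) < H := lt_of_lt_of_le hh hH
  have h1 : (1:ℝ) ≤ H := by exact_mod_cast Nat.cast_pos.mp hH0
  calc pochhammerReal h r ≤ ∏ i ∈ Finset.range r, ((H : ℝ) * (i + 1)) := by
        apply Finset.prod_le_prod
        · intro i _; positivity
        · intro i _
          have : (0:ℝ) ≤ i := Nat.cast_nonneg i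
          nlinarith
    _ = (H : ℝ) ^ r * r.factorial := by
        rw [Finset.prod_mul_distrib, Finset.prod_const, Finset.card_range]
        congr 1
        induction r with
        | zero => simp
        | succ n ih => rw [Finset.prod_range_succ, ih, Nat.factorial_succ]; push_cast; ring

lemma pow_le_exp_mul_factorial {A : ℝ} (hA : 0 ≤ A) (k : ℕ) :
    A ^ k ≤ Real.exp A * k.factorial := by
  have hexp : Real.exp A = ∑' n : ℕ, A ^ n / n.factorial := by
    rw [Real.exp_eq_exp_ℝ, NormedSpace.exp_eq_tsum_div]
  have hsum : Summable (fun n : ℕ => A ^ n / n.factorial) := by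
    simpa using Real.summable_pow_div_factorial A
  have hle : A ^ k / k.factorial ≤ Real.exp A := by
    rw [hexp]
    exact Summable.le_tsum hsum k (fun j _ => by positivity)
  have hk : (0:ℝ) < k.factorial := by positivity
  calc A ^ k = A ^ k / k.factorial * k.factorial := by field_simp
    _ ≤ Real.exp A * k.factorial := mul_le_mul_of_nonneg_right hle hk.le

lemma Gamma_ge {A y : ℝ} (hA : 1 ≤ A) (hy : 2 ≤ y) :
    Real.exp (-A) * A ^ (y - 2) ≤ Real.Gamma y := by
  set n := ⌊y⌋₊ with hn
  have hyn : (n : ℝ) ≤ y := Nat.floor_le (by linarith)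
  have hy_lt : y < n + 1 := Nat.lt_floor_add_one y
  have hn2 : 2 ≤ n := Nat.le_floor (by exact_mod_cast hy)
  have hn2' : (2:ℝ) ≤ (n:ℝ) := by exact_mod_cast hn2
  have h1 : Real.Gamma (n : ℝ) ≤ Real.Gamma y := by
    rcases eq_or_lt_of_le hyn with h | h
    · rw [h]
    · exact (Real.Gamma_strictMonoOn_Ici hn2' (le_trans hn2' hyn) h).le
  have hcast : ((n - 1 : ℕ) : ℝ) = (n : ℝ) - 1 := by
    have h1n : 1 ≤ n := by omega
    push_cast [Nat.cast_sub h1n]; ring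
  have h2 : Real.Gamma (n : ℝ) = (n - 1).factorial := by
    have : ((n : ℝ)) = ((n-1 : ℕ) : ℝ) + 1 := by rw [hcast]; ring
    rw [this, Real.Gamma_nat_eq_factorial]
  have h3 : A ^ ((n:ℝ) - 1) ≤ Real.exp A * (n-1).factorial := by
    calc A ^ ((n:ℝ) - 1) = A ^ ((n-1 : ℕ) : ℝ) := by rw [hcast]
      _ = A ^ (n - 1 : ℕ) := Real.rpow_natCast A (n-1)
      _ ≤ Real.exp A * (n-1).factorial := pow_le_exp_mul_factorial (le_trans zero_le_one hA) _
  have h4 : A ^ (y - 2) ≤ A ^ ((n:ℝ) - 1) := by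
    apply Real.rpow_le_rpow_of_exponent_le hA
    linarith
  have hexp : (0:ℝ) < Real.exp (-A) := Real.exp_pos _
  calc Real.exp (-A) * A ^ (y - 2) ≤ Real.exp (-A) * A ^ ((n:ℝ) - 1) :=
        mul_le_mul_of_nonneg_left h4 hexp.le
    _ ≤ Real.exp (-A) * (Real.exp A * (n-1).factorial) := mul_le_mul_of_nonneg_left h3 hexp.le
    _ = (n-1).factorial := by rw [← mul_assoc, ← Real.exp_add]; simp
    _ = Real.Gamma (n : ℝ) := h2.symm
    _ ≤ Real.Gamma y := h1

lemma summable_coeff {ν β h : ℝ} (hν : 0 < ν) (hβ : 0 < β) (hh : 0 < h) :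
    Summable (fun r : ℕ => pochhammerReal h r / (r.factorial * Real.Gamma (ν * r + β))) := by
  set H := ⌈h⌉₊ with hHdef
  have hH : h ≤ H := Nat.le_ceil h
  have hH0 : (0:ℝ) < H := lt_of_lt_of_le hh hH
  have h1H : (1:ℝ) ≤ H := by exact_mod_cast Nat.cast_pos.mp hH0
  have h2H : (1:ℝ) ≤ 2 * H := by linarith
  have h2H0 : (0:ℝ) < 2 * H := by linarith
  set A := (2 * (H:ℝ)) ^ (1/ν : ℝ) with hAdef
  have hA1 : 1 ≤ A := by
    rw [hAdef]
    calc (1:ℝ) = (2 * (H:ℝ)) ^ (0:ℝ) := by simp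
      _ ≤ (2 * (H:ℝ)) ^ (1/ν : ℝ) :=
        Real.rpow_le_rpow_of_exponent_le h2H (by positivity)
  have hA0 : (0:ℝ) < A := lt_of_lt_of_le one_pos hA1
  have hAν : A ^ ν = 2 * H := by
    rw [hAdef, ← Real.rpow_mul h2H0.le, one_div_mul_cancel hν.ne', Real.rpow_one]
  set C := Real.exp A * A ^ 2 with hCdef
  have hC0 : 0 < C := by positivity
  set r0 := ⌈2/ν⌉₊ with hr0def
  have key : ∀ r : ℕ, r0 ≤ r →
      pochhammerReal h r / (r.factorial * Real.Gamma (ν * r + β)) ≤ C * (1/2) ^ r := by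
    intro r hr
    have hνr : 2 ≤ ν * r := by
      have h1 : (2/ν : ℝ) ≤ r := le_trans (Nat.le_ceil _) (by exact_mod_cast hr)
      calc (2:ℝ) = ν * (2/ν) := by field_simp
        _ ≤ ν * r := by apply mul_le_mul_of_nonneg_left h1 hν.le
    have hy2 : 2 ≤ ν * r + β := by linarith
    -- Gamma lower bound chain
    have hGl : Real.exp (-A) * A ^ (ν * r + β - 2) ≤ Real.Gamma (ν * r + β) := Gamma_ge hA1 hy2
    have e1 : A ^ ((ν * r : ℝ) - 2) ≤ A ^ (ν * r + β - 2) :=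
      Real.rpow_le_rpow_of_exponent_le hA1 (by linarith)
    have e2 : A ^ ((ν * r : ℝ) - 2) = (2 * (H:ℝ)) ^ r / A ^ 2 := by
      rw [Real.rpow_sub hA0, Real.rpow_mul hA0.le, hAν, Real.rpow_natCast]
      norm_num [Real.rpow_natCast A 2]
    have hD : Real.exp (-A) * ((2 * (H:ℝ)) ^ r / A ^ 2) ≤ Real.Gamma (ν * r + β) := by
      refine le_trans ?_ hGl
      rw [← e2]
      exact mul_le_mul_of_nonneg_left e1 (Real.exp_pos _).le
    have hD0 : (0:ℝ) < Real.exp (-A) * ((2 * (H:ℝ)) ^ r / A ^ 2) := by positivity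
    have hG0 : (0:ℝ) < Real.Gamma (ν * r + β) := lt_of_lt_of_le hD0 hD
    have hfac : (0:ℝ) < (r.factorial : ℝ) := by positivity
    -- main chain
    calc pochhammerReal h r / (r.factorial * Real.Gamma (ν * r + β))
        ≤ ((H:ℝ) ^ r * r.factorial) / (r.factorial * Real.Gamma (ν * r + β)) := by
          gcongr <;> first
            | positivity
            | exact poch_le hh H hH r
            | exact hG0
      _ = (H:ℝ) ^ r / Real.Gamma (ν * r + β) := by
          rw [mul_comm ((H:ℝ)^r) _, mul_div_mul_left _ _ hfac.ne']
      _ ≤ (H:ℝ) ^ r / (Real.exp (-A) * ((2 * (H:ℝ)) ^ r / A ^ 2)) := by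
          gcongr <;> first
            | positivity
            | exact hD
      _ = C * (1/2) ^ r := by
          rw [mul_pow, hCdef, Real.exp_neg, div_pow]
          field_simp
          ring
  have hGpos : ∀ m : ℕ, (0:ℝ) < Real.Gamma (ν * m + β) := fun m =>
    Real.Gamma_pos_of_pos (add_pos_of_nonneg_of_pos (mul_nonneg hν.le (Nat.cast_nonneg _)) hβ)
  refine (summable_nat_add_iff r0).mp (Summable.of_nonneg_of_le (fun n => ?_) (fun n => ?_)
    ((summable_geometric_of_lt_one (r := (1/2:ℝ)) (by norm_num) (by norm_num)).mul_left (C * (1/2)^r0)))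
  · exact div_nonneg (poch_pos hh _).le
      (mul_nonneg (Nat.cast_nonneg _) (hGpos (n + r0)).le)
  · refine le_trans (key (n + r0) (Nat.le_add_left _ _)) (le_of_eq ?_)
    rw [pow_add]; ring

noncomputable def mlCoeff (ν β h : ℝ) (r : ℕ) : ℝ :=
  pochhammerReal h r / (r.factorial * Real.Gamma (ν * r + β))

lemma mlCoeff_pos {ν β h : ℝ} (hν : 0 < ν) (hβ : 0 < β) (hh : 0 < h) (r : ℕ) :
    0 < mlCoeff ν β h r := by
  have hG : 0 < Real.Gamma (ν * r + β) :=
    Real.Gamma_pos_of_pos (add_pos_of_nonneg_of_pos (by positivity) hβ)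
  have hf : (0:ℝ) < r.factorial := by positivity
  exact div_pos (poch_pos hh r) (mul_pos hf hG)

lemma summable_mlCoeff {ν β h : ℝ} (hν : 0 < ν) (hβ : 0 < β) (hh : 0 < h) (k : ℕ) :
    Summable (fun r : ℕ => mlCoeff ν β h (r + k)) :=
  (summable_nat_add_iff k).mpr (summable_coeff hν hβ hh)

lemma summable_mlCoeff_mul_pow {ν β h : ℝ} (hν : 0 < ν) (hβ : 0 < β) (hh : 0 < h) (k : ℕ)
    {x : ℝ} (hx : |x| ≤ 1) :
    Summable (fun r : ℕ => mlCoeff ν β h (r + k) * x ^ r) := by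
  apply Summable.of_norm_bounded (summable_mlCoeff hν hβ hh k)
  intro r
  have hc := (mlCoeff_pos hν hβ hh (r + k)).le
  rw [norm_mul, Real.norm_eq_abs, Real.norm_eq_abs, abs_of_nonneg hc, abs_pow]
  calc mlCoeff ν β h (r + k) * |x| ^ r ≤ mlCoeff ν β h (r + k) * 1 ^ r := by
        apply mul_le_mul_of_nonneg_left (pow_le_pow_left₀ (abs_nonneg x) hx r) hc
    _ = mlCoeff ν β h (r + k) := by simp

lemma genML_split {ν β h : ℝ} (hν : 0 < ν) (hβ : 0 < β) (hh : 0 < h) {x : ℝ} (hx : |x| ≤ 1) :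
    genML ν β h x = mlCoeff ν β h 0 + mlCoeff ν β h 1 * x
      + x ^ 2 * ∑' r : ℕ, mlCoeff ν β h (r + 2) * x ^ r := by
  have hgen : genML ν β h x = ∑' r : ℕ, mlCoeff ν β h r * x ^ r := by
    apply tsum_congr
    intro r
    rw [mlCoeff]
    ring
  have S0 : Summable (fun r : ℕ => mlCoeff ν β h r * x ^ r) := by
    simpa using summable_mlCoeff_mul_pow hν hβ hh 0 hx
  have S1 : Summable (fun r : ℕ => mlCoeff ν β h (r + 1) * x ^ (r + 1)) := by
    exact ((summable_nat_add_iff 1).mpr S0 : _)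
  rw [hgen, Summable.tsum_eq_zero_add S0]
  have e1 : ∑' r : ℕ, mlCoeff ν β h (r + 1) * x ^ (r + 1)
      = mlCoeff ν β h 1 * x ^ 1 + ∑' r : ℕ, mlCoeff ν β h (r + 2) * x ^ (r + 2) := by
    rw [Summable.tsum_eq_zero_add S1]
  rw [e1]
  have e2 : ∑' r : ℕ, mlCoeff ν β h (r + 2) * x ^ (r + 2)
      = (∑' r : ℕ, mlCoeff ν β h (r + 2) * x ^ r) * x ^ 2 := by
    rw [← tsum_mul_right]
    apply tsum_congr
    intro r
    ring
  rw [e2]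
  ring

lemma abs_Q_le {ν β h : ℝ} (hν : 0 < ν) (hβ : 0 < β) (hh : 0 < h) {x : ℝ} (hx : |x| ≤ 1) :
    |∑' r : ℕ, mlCoeff ν β h (r + 2) * x ^ r| ≤ ∑' r : ℕ, mlCoeff ν β h (r + 2) := by
  have hnorm : Summable (fun r : ℕ => ‖mlCoeff ν β h (r + 2) * x ^ r‖) := by
    apply Summable.of_nonneg_of_le (fun r => norm_nonneg _) _ (summable_mlCoeff hν hβ hh 2)
    intro r
    have hc := (mlCoeff_pos hν hβ hh (r + 2)).le
    rw [norm_mul, Real.norm_eq_abs, Real.norm_eq_abs, abs_of_nonneg hc, abs_pow]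
    calc mlCoeff ν β h (r + 2) * |x| ^ r ≤ mlCoeff ν β h (r + 2) * 1 ^ r :=
          mul_le_mul_of_nonneg_left (pow_le_pow_left₀ (abs_nonneg x) hx r) hc
      _ = mlCoeff ν β h (r + 2) := by simp
  calc |∑' r : ℕ, mlCoeff ν β h (r + 2) * x ^ r| ≤ ∑' r : ℕ, ‖mlCoeff ν β h (r + 2) * x ^ r‖ :=
        norm_tsum_le_tsum_norm hnorm
    _ ≤ ∑' r : ℕ, mlCoeff ν β h (r + 2) := by
        apply Summable.tsum_le_tsum _ hnorm (summable_mlCoeff hν hβ hh 2)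
        intro r
        have hc := (mlCoeff_pos hν hβ hh (r + 2)).le
        rw [norm_mul, Real.norm_eq_abs, Real.norm_eq_abs, abs_of_nonneg hc, abs_pow]
        calc mlCoeff ν β h (r + 2) * |x| ^ r ≤ mlCoeff ν β h (r + 2) * 1 ^ r :=
              mul_le_mul_of_nonneg_left (pow_le_pow_left₀ (abs_nonneg x) hx r) hc
          _ = mlCoeff ν β h (r + 2) := by simp

set_option maxHeartbeats 1000000 in
lemma tilting_forward {ν h lam c θ : ℝ} (hν : ν ∈ Set.Ioo (0:ℝ) 1) (hh : 0 < h)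
    (hlam : 0 < lam) (hc : 0 < c) (hθ : 0 ≤ θ)
    (hid : ∀ t : ℝ, 0 < t →
      Real.exp (-(c * θ * t)) * genML ν (ν * h) h (-(lam * t ^ ν))
        = genML ν (ν * h) h (-((lam + (c * θ) ^ ν) * t ^ ν))) : θ = 0 := by
  by_contra hθ0
  obtain ⟨hν0, hν1⟩ := hν
  have hθpos : 0 < θ := lt_of_le_of_ne hθ (Ne.symm hθ0)
  have ha : 0 < c * θ := mul_pos hc hθpos
  have hμ : 0 < (c * θ) ^ ν := Real.rpow_pos_of_pos ha ν
  have hβ : 0 < ν * h := mul_pos hν0 hh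
  set μ := (c * θ) ^ ν with hμdef
  set a := c * θ with hadef
  set c0 := mlCoeff ν (ν * h) h 0 with hc0def
  set c1 := mlCoeff ν (ν * h) h 1 with hc1def
  set Q : ℝ → ℝ := fun x => ∑' r : ℕ, mlCoeff ν (ν * h) h (r + 2) * x ^ r with hQdef
  set M := ∑' r : ℕ, mlCoeff ν (ν * h) h (r + 2) with hMdef
  have hc1 : 0 < c1 := mlCoeff_pos hν0 hβ hh 1
  have hM : 0 ≤ M := tsum_nonneg fun r => (mlCoeff_pos hν0 hβ hh (r + 2)).le
  set l : Filter ℝ := nhdsWithin 0 (Set.Ioi 0) with hldef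
  have h_t_pos : ∀ᶠ t : ℝ in l, 0 < t := by
    filter_upwards [self_mem_nhdsWithin] with t ht
    exact ht
  have h_rpow : ∀ p : ℝ, 0 < p → Tendsto (fun t : ℝ => t ^ p) l (nhds 0) := by
    intro p hp
    have hca : ContinuousAt (fun t : ℝ => t ^ p) 0 :=
      Real.continuousAt_rpow_const 0 p (Or.inr hp.le)
    have hle : l ≤ nhds 0 := nhdsWithin_le_nhds
    have := hca.tendsto.mono_left hle
    simpa [Real.zero_rpow hp.ne'] using this
  have h_small : ∀ᶠ t : ℝ in l, (lam + μ) * t ^ ν ≤ 1 := by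
    have : Tendsto (fun t : ℝ => (lam + μ) * t ^ ν) l (nhds 0) := by
      simpa using (h_rpow ν hν0).const_mul (lam + μ)
    exact (this.eventually (eventually_le_nhds zero_lt_one))
  -- the two functions
  set f : ℝ → ℝ := fun t =>
    c0 * (Real.exp (-(a * t)) - 1) / t ^ ν + c1 * ((lam + μ) - lam * Real.exp (-(a * t)))
    with hfdef
  set g : ℝ → ℝ := fun t =>
    t ^ ν * ((lam + μ) ^ 2 * Q (-((lam + μ) * t ^ ν)) - Real.exp (-(a * t)) * lam ^ 2 * Q (-(lam * t ^ ν)))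
    with hgdef
  have habs : ∀ t : ℝ, 0 < t → (lam + μ) * t ^ ν ≤ 1 →
      |(-(lam * t ^ ν))| ≤ 1 ∧ |(-((lam + μ) * t ^ ν))| ≤ 1 := by
    intro t ht hsm
    have hs : 0 < t ^ ν := Real.rpow_pos_of_pos ht ν
    constructor
    · rw [abs_neg, abs_of_nonneg (by positivity)]
      nlinarith
    · rw [abs_neg, abs_of_nonneg (by positivity)]
      exact hsm
  have hfg : ∀ᶠ t : ℝ in l, f t = g t := by
    filter_upwards [h_t_pos, h_small] with t ht hsm
    have hs : 0 < t ^ ν := Real.rpow_pos_of_pos ht ν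
    obtain ⟨h1, h2⟩ := habs t ht hsm
    have hid' := hid t ht
    rw [genML_split hν0 hβ hh h1, genML_split hν0 hβ hh h2] at hid'
    have key : f t * t ^ ν = g t * t ^ ν := by
      simp only [hfdef, hgdef, hQdef]
      rw [add_mul, div_mul_cancel₀ _ hs.ne']
      linear_combination hid'
    exact mul_right_cancel₀ hs.ne' key
  -- limit of f
  have hf1 : Tendsto (fun t : ℝ => c0 * (Real.exp (-(a * t)) - 1) / t ^ ν) l (nhds 0) := by
    apply squeeze_zero_norm' (a := fun t : ℝ => (|c0| * a) * t ^ (1 - ν))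
    · filter_upwards [h_t_pos] with t ht
      have hs : 0 < t ^ ν := Real.rpow_pos_of_pos ht ν
      have hE1 : Real.exp (-(a * t)) ≤ 1 := Real.exp_le_one_iff.mpr (by nlinarith)
      have hE2 : 1 - a * t ≤ Real.exp (-(a * t)) := by
        have := Real.add_one_le_exp (-(a * t))
        linarith
      have habs' : |Real.exp (-(a * t)) - 1| ≤ a * t := by
        rw [abs_of_nonpos (by linarith)]
        linarith
      have ht1ν : t / t ^ ν = t ^ (1 - ν) := by
        rw [Real.rpow_sub ht, Real.rpow_one]
      calc ‖c0 * (Real.exp (-(a * t)) - 1) / t ^ ν‖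
          = |c0| * |Real.exp (-(a * t)) - 1| / t ^ ν := by
            rw [Real.norm_eq_abs, abs_div, abs_mul, abs_of_pos hs]
        _ ≤ |c0| * (a * t) / t ^ ν := by
            gcongr
        _ = (|c0| * a) * t ^ (1 - ν) := by rw [← ht1ν]; ring
    · have := (h_rpow (1 - ν) (by linarith)).const_mul (|c0| * a)
      simpa using this
  have hf2 : Tendsto (fun t : ℝ => c1 * ((lam + μ) - lam * Real.exp (-(a * t)))) l
      (nhds (c1 * μ)) := by
    have hcont : Continuous (fun t : ℝ => c1 * ((lam + μ) - lam * Real.exp (-(a * t)))) := by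
      continuity
    have hle : l ≤ nhds 0 := nhdsWithin_le_nhds
    have := (hcont.tendsto 0).mono_left hle
    simpa [Real.exp_zero, add_sub_cancel_left] using this
  have hf_lim : Tendsto f l (nhds (c1 * μ)) := by
    have := hf1.add hf2
    simpa [hfdef] using this
  have hg_lim : Tendsto g l (nhds 0) := by
    apply squeeze_zero_norm' (a := fun t : ℝ => (((lam + μ) ^ 2 + lam ^ 2) * M) * t ^ ν)
    · filter_upwards [h_t_pos, h_small] with t ht hsm
      have hs : 0 < t ^ ν := Real.rpow_pos_of_pos ht ν
      obtain ⟨h1, h2⟩ := habs t ht hsm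
      have hQ1 : |Q (-(lam * t ^ ν))| ≤ M := abs_Q_le hν0 hβ hh h1
      have hQ2 : |Q (-((lam + μ) * t ^ ν))| ≤ M := abs_Q_le hν0 hβ hh h2
      have hE1 : Real.exp (-(a * t)) ≤ 1 := Real.exp_le_one_iff.mpr (by nlinarith)
      have hE0 : 0 < Real.exp (-(a * t)) := Real.exp_pos _
      rw [hgdef]
      simp only []
      rw [Real.norm_eq_abs, abs_mul, abs_of_pos hs, mul_comm]
      apply mul_le_mul_of_nonneg_right _ hs.le
      calc |(lam + μ) ^ 2 * Q (-((lam + μ) * t ^ ν)) -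
              Real.exp (-(a * t)) * lam ^ 2 * Q (-(lam * t ^ ν))|
          ≤ |(lam + μ) ^ 2 * Q (-((lam + μ) * t ^ ν))| +
              |Real.exp (-(a * t)) * lam ^ 2 * Q (-(lam * t ^ ν))| := abs_sub _ _
        _ ≤ (lam + μ) ^ 2 * M + lam ^ 2 * M := by
            rw [abs_mul, abs_mul, abs_mul]
            rw [abs_of_nonneg (by positivity : (0:ℝ) ≤ (lam + μ) ^ 2),
              abs_of_pos hE0, abs_of_nonneg (by positivity : (0:ℝ) ≤ lam ^ 2)]
            have b1 : (lam + μ) ^ 2 * |Q (-((lam + μ) * t ^ ν))| ≤ (lam + μ) ^ 2 * M :=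
              mul_le_mul_of_nonneg_left hQ2 (by positivity)
            have b2 : Real.exp (-(a * t)) * (lam ^ 2 * |Q (-(lam * t ^ ν))|) ≤
                1 * (lam ^ 2 * M) := by
              apply mul_le_mul hE1 (mul_le_mul_of_nonneg_left hQ1 (by positivity))
                (by positivity) zero_le_one
            rw [mul_assoc]
            linarith
        _ = ((lam + μ) ^ 2 + lam ^ 2) * M := by ring
    · have := (h_rpow ν hν0).const_mul (((lam + μ) ^ 2 + lam ^ 2) * M)
      simpa using this
  have hne : l.NeBot := by
    rw [hldef]
    exact nhdsGT_neBot 0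
  have huniq : c1 * μ = 0 := tendsto_nhds_unique (hf_lim.congr' hfg) hg_lim
  nlinarith

lemma genML_one {h : ℝ} (hh : 0 < h) (y : ℝ) :
    genML 1 h h y = Real.exp y / Real.Gamma h := by
  unfold genML
  have hstep : ∀ r : ℕ, pochhammerReal h r * y ^ r / (r.factorial * Real.Gamma (1 * r + h))
      = y ^ r / r.factorial / Real.Gamma h := by
    intro r
    have hg : Real.Gamma (1 * (r:ℝ) + h) = pochhammerReal h r * Real.Gamma h := by
      rw [one_mul, add_comm]
      exact Gamma_add_nat hh r
    rw [hg]
    have hpoch := (poch_pos hh r).ne'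
    have hG := (Real.Gamma_pos_of_pos hh).ne'
    have hfac : ((r.factorial : ℝ)) ≠ 0 := by positivity
    field_simp
  rw [tsum_congr hstep, tsum_div_const]
  congr 1
  rw [Real.exp_eq_exp_ℝ, NormedSpace.exp_eq_tsum_div]

lemma tilting_one {h lam c : ℝ} (hh : 0 < h) (hlam : 0 < lam) (hc : 0 < c) :
    ∀ θ' : ℝ, 0 ≤ θ' → ∀ t : ℝ, 0 < t →
      Real.exp (-(c * θ' * t)) * genML 1 h h (-(lam * t))
        = genML 1 h h (-((lam + c * θ') * t)) := by
  intro θ' _ t _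
  rw [genML_one hh, genML_one hh, ← mul_div_assoc, ← Real.exp_add]
  have : -(c * θ' * t) + -(lam * t) = -((lam + c * θ') * t) := by ring
  rw [this]

end MLaux

/-- The exponential-tilting identity for the generalized Mittag-Leffler function holds for all
`t > 0` iff `θ = 0` when `ν ∈ (0,1)`, whereas it always holds when `ν = 1`. -/
theorem mittagLeffler_tilting_iff (ν h lam c : ℝ) (hν : ν ∈ Set.Ioo (0 : ℝ) 1)
    (hh : 0 < h) (hlam : 0 < lam) (hc : 0 < c) (θ : ℝ) (hθ : 0 ≤ θ) :
    ((∀ t : ℝ, 0 < t →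
        Real.exp (-(c * θ * t)) * genML ν (ν * h) h (-(lam * t ^ ν))
          = genML ν (ν * h) h (-((lam + (c * θ) ^ ν) * t ^ ν))) ↔ θ = 0) ∧
    (∀ θ' : ℝ, 0 ≤ θ' → ∀ t : ℝ, 0 < t →
      Real.exp (-(c * θ' * t)) * genML 1 h h (-(lam * t))
        = genML 1 h h (-((lam + c * θ') * t))) := by
  refine ⟨⟨fun hid => tilting_forward hν hh hlam hc hθ hid, fun hz => ?_⟩,
    tilting_one hh hlam hc⟩
  subst hz
  intro t ht
  simp [Real.zero_rpow hν.1.ne']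
end
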